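/- Define a sequence of integers (L_k)_{k≥0} and auxiliary doubly indexed integers m_{k,i} (k ≥ 0, i ≥ 1) by m_{0,i} = 1 for all i, m_{k,0} = 0, and the recurrence m_{k,i} = m_{k,i-1} + Σ_{j≥i} (-1)^{j-i} m_{k - C(j-i+2,2), j+1}, where m_{t,i} = 0 for t < 0 (the sum is finite). Set L_k = m_{k,1}. Then the power series ξ_0(y) = Σ_{k≥0} L_k y^k satisfies Σ_{n≥0} y^{C(n,2)} (-ξ_0(y))^n = 0, i.e., -ξ_0(y) is the leading root of the partial theta function Σ_{n≥0} y^{C(n,2)} x^n. -/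

import Mathlib

open Finset PowerSeries

private lemma cs_lb (s : ℕ) : s + 1 ≤ (s + 2).choose 2 := by
  have h : (s + 2).choose 2 = (s + 1).choose 1 + (s + 1).choose 2 :=
    Nat.choose_succ_succ (s + 1) 1
  rw [Nat.choose_one_right] at h
  omega

private lemma conv_shift (φ ψ : PowerSeries ℤ) (k c : ℕ) (hc : 1 ≤ c) :
    (∑ t ∈ Finset.range k,
      (if c ≤ t + 1 then (PowerSeries.coeff (R := ℤ) (t + 1 - c)) φ else 0) *
        (PowerSeries.coeff (R := ℤ) (k - (t + 1))) ψ) =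
    if c ≤ k then (PowerSeries.coeff (R := ℤ) (k - c)) (φ * ψ) else 0 := by
  by_cases hck : c ≤ k
  · rw [if_pos hck, PowerSeries.coeff_mul,
      Finset.Nat.sum_antidiagonal_eq_sum_range_succ_mk]
    have hsub : Finset.Ico (c - 1) k ⊆ Finset.range k := by
      rw [Finset.range_eq_Ico]
      exact Finset.Ico_subset_Ico (Nat.zero_le _) le_rfl
    have hz : ∀ t ∈ Finset.range k, t ∉ Finset.Ico (c - 1) k →
        (if c ≤ t + 1 then (PowerSeries.coeff (R := ℤ) (t + 1 - c)) φ else 0) *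
          (PowerSeries.coeff (R := ℤ) (k - (t + 1))) ψ = 0 := by
      intro t ht hnt
      simp only [Finset.mem_range] at ht
      simp only [Finset.mem_Ico] at hnt
      rw [if_neg (by omega), zero_mul]
    rw [← Finset.sum_subset hsub hz, Finset.sum_Ico_eq_sum_range]
    have hk' : k - (c - 1) = k - c + 1 := by omega
    rw [hk']
    apply Finset.sum_congr rfl
    intro u hu
    simp only [Finset.mem_range] at hu
    rw [if_pos (by omega)]
    have e1 : c - 1 + u + 1 - c = u := by omega
    have e2 : k - (c - 1 + u + 1) = k - c - u := by omega
    rw [e1, e2]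
  · rw [if_neg hck]
    apply Finset.sum_eq_zero
    intro t ht
    simp only [Finset.mem_range] at ht
    rw [if_neg (by omega), zero_mul]

/-- Let `m k i` be the stabilized counts defined by `m 0 i = 1` for `i ≥ 1`,
`m k 0 = 0`, and for `k, i ≥ 1` the recurrence
`m k i = m k (i-1) + ∑_{j ≥ i} (-1)^{j-i} m (k - C(j-i+2,2)) (j+1)`
(only the terms with `C(j-i+2,2) ≤ k` contribute, so the sum is finite and terms with
`t < 0` are zero). Set `L_k = m k 1` and `ξ₀(y) = ∑_k L_k y^k`. Then
`∑_{n≥0} y^{C(n,2)} (-ξ₀(y))^n = 0`, i.e. `-ξ₀` is the leading root of the partial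
theta function (the equation is stated coefficientwise; only terms with `n ≤ N+1`
can contribute to the coefficient of `y^N`). -/
theorem leading_root_coefficients_count_braids
    (m : ℕ → ℕ → ℤ)
    (hbase : ∀ i : ℕ, 1 ≤ i → m 0 i = 1)
    (hzero : ∀ k : ℕ, m k 0 = 0)
    (hrec : ∀ k i : ℕ, 1 ≤ k → 1 ≤ i →
      m k i = m k (i - 1) + ∑ j ∈ Finset.Ico i (k + i),
        (-1 : ℤ) ^ (j - i) *
          (if (j - i + 2).choose 2 ≤ k then m (k - (j - i + 2).choose 2) (j + 1) else 0)) :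
    ∀ N : ℕ, ∑ n ∈ Finset.range (N + 2),
      (PowerSeries.coeff (R := ℤ) N)
        ((PowerSeries.X : PowerSeries ℤ) ^ (n.choose 2) *
          (-(PowerSeries.mk fun k => m k 1)) ^ n) = 0 := by
  set ξ : PowerSeries ℤ := PowerSeries.mk fun k => m k 1 with hξdef
  -- cleaned-up recurrence
  have hrec' : ∀ k i : ℕ, 1 ≤ k → 1 ≤ i →
      m k i = m k (i - 1) + ∑ s ∈ Finset.range k, (-1 : ℤ) ^ s *
        (if (s + 2).choose 2 ≤ k then m (k - (s + 2).choose 2) (i + s + 1) else 0) := by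
    intro k i hk hi
    rw [hrec k i hk hi]
    congr 1
    rw [Finset.sum_Ico_eq_sum_range]
    have hk' : k + i - i = k := by omega
    rw [hk']
    apply Finset.sum_congr rfl
    intro s _
    have e : i + s - i = s := by omega
    rw [e]
  -- main lemma : m k i is the k-th coefficient of ξ^i
  have key : ∀ k : ℕ, ∀ i : ℕ, 1 ≤ i → m k i = (PowerSeries.coeff (R := ℤ) k) (ξ ^ i) := by
    intro k
    induction k using Nat.strong_induction_on with
    | _ k IH =>
    intro i hi
    induction i with
    | zero => omega
    | succ i IHi =>
      rcases Nat.eq_zero_or_pos i with rfl | hipos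
      · rw [pow_one, hξdef, PowerSeries.coeff_mk]
      rcases Nat.eq_zero_or_pos k with rfl | hk
      · rw [hbase (i + 1) (by omega), PowerSeries.coeff_zero_eq_constantCoeff_apply,
          map_pow, hξdef, PowerSeries.constantCoeff_mk, hbase 1 le_rfl, one_pow]
      -- k ≥ 1, i ≥ 1
      rw [hrec' k (i + 1) hk (by omega)]
      simp only [Nat.add_sub_cancel]
      rw [IHi hipos]
      have hsum : ∀ s ∈ Finset.range k, (-1 : ℤ) ^ s *
          (if (s + 2).choose 2 ≤ k then m (k - (s + 2).choose 2) (i + 1 + s + 1) else 0)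
          = (-1 : ℤ) ^ s * (if (s + 2).choose 2 ≤ k then
              (PowerSeries.coeff (R := ℤ) (k - (s + 2).choose 2)) (ξ ^ (i + s + 2)) else 0) := by
        intro s _
        congr 1
        by_cases hcs : (s + 2).choose 2 ≤ k
        · rw [if_pos hcs, if_pos hcs,
            IH (k - (s + 2).choose 2) (by have := cs_lb s; omega) (i + 1 + s + 1) (by omega)]
          have e : i + 1 + s + 1 = i + s + 2 := by omega
          rw [e]
        · rw [if_neg hcs, if_neg hcs]
      rw [Finset.sum_congr rfl hsum]
      -- expand coeff k (ξ^(i+1)) by convolution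
      have expand : (PowerSeries.coeff (R := ℤ) k) (ξ ^ (i + 1)) = (PowerSeries.coeff (R := ℤ) k) (ξ ^ i)
          + ∑ t ∈ Finset.range k, m (t + 1) 1 * (PowerSeries.coeff (R := ℤ) (k - (t + 1))) (ξ ^ i) := by
        rw [pow_succ', PowerSeries.coeff_mul,
          Finset.Nat.sum_antidiagonal_eq_sum_range_succ_mk, Finset.sum_range_succ']
        have hc0 : (PowerSeries.coeff (R := ℤ) 0) ξ = 1 := by
          rw [hξdef, PowerSeries.coeff_mk, hbase 1 le_rfl]
        rw [hc0]
        have hct : ∀ t ∈ Finset.range k,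
            (PowerSeries.coeff (R := ℤ) (t + 1)) ξ * (PowerSeries.coeff (R := ℤ) (k - (t + 1))) (ξ ^ i)
            = m (t + 1) 1 * (PowerSeries.coeff (R := ℤ) (k - (t + 1))) (ξ ^ i) := by
          intro t _
          rw [hξdef, PowerSeries.coeff_mk]
        rw [Finset.sum_congr rfl hct]
        simp [add_comm]
      rw [expand]
      congr 1
      -- expand m (t+1) 1 and swap sums
      have hm1 : ∀ t ∈ Finset.range k,
          m (t + 1) 1 * (PowerSeries.coeff (R := ℤ) (k - (t + 1))) (ξ ^ i)
          = ∑ s ∈ Finset.range k, (-1 : ℤ) ^ s *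
              ((if (s + 2).choose 2 ≤ t + 1 then
                  (PowerSeries.coeff (R := ℤ) (t + 1 - (s + 2).choose 2)) (ξ ^ (s + 2)) else 0)
                * (PowerSeries.coeff (R := ℤ) (k - (t + 1))) (ξ ^ i)) := by
        intro t ht
        simp only [Finset.mem_range] at ht
        rw [hrec' (t + 1) 1 (by omega) le_rfl, hzero, zero_add, Finset.sum_mul]
        have step : ∀ s ∈ Finset.range (t + 1),
            ((-1 : ℤ) ^ s * (if (s + 2).choose 2 ≤ t + 1 then
                m (t + 1 - (s + 2).choose 2) (1 + s + 1) else 0))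
              * (PowerSeries.coeff (R := ℤ) (k - (t + 1))) (ξ ^ i)
            = (-1 : ℤ) ^ s *
              ((if (s + 2).choose 2 ≤ t + 1 then
                  (PowerSeries.coeff (R := ℤ) (t + 1 - (s + 2).choose 2)) (ξ ^ (s + 2)) else 0)
                * (PowerSeries.coeff (R := ℤ) (k - (t + 1))) (ξ ^ i)) := by
          intro s _
          rw [mul_assoc]
          congr 2
          by_cases hcs : (s + 2).choose 2 ≤ t + 1
          · rw [if_pos hcs, if_pos hcs,
              IH (t + 1 - (s + 2).choose 2) (by have := cs_lb s; omega) (1 + s + 1) (by omega)]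
            have e : 1 + s + 1 = s + 2 := by omega
            rw [e]
          · rw [if_neg hcs, if_neg hcs]
        rw [Finset.sum_congr rfl step]
        -- extend the summation range from t+1 to k
        apply Finset.sum_subset (by simp [Finset.range_subset]; omega)
        intro s _ hs
        simp only [Finset.mem_range] at hs
        rw [if_neg (by have := cs_lb s; omega), zero_mul, mul_zero]
      rw [Finset.sum_congr rfl hm1, Finset.sum_comm]
      apply Finset.sum_congr rfl
      intro s _
      rw [← Finset.mul_sum,
        conv_shift (ξ ^ (s + 2)) (ξ ^ i) k ((s + 2).choose 2) (by have := cs_lb s; omega),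
        ← pow_add]
      have e : s + 2 + i = i + s + 2 := by omega
      rw [e]
  -- now the main statement
  intro N
  have hsummand : ∀ n ∈ Finset.range (N + 2), (PowerSeries.coeff (R := ℤ) N)
      ((PowerSeries.X : PowerSeries ℤ) ^ (n.choose 2) * (-ξ) ^ n)
      = (-1 : ℤ) ^ n *
        (if n.choose 2 ≤ N then (PowerSeries.coeff (R := ℤ) (N - n.choose 2)) (ξ ^ n) else 0) := by
    intro n _
    have hneg : (-ξ) ^ n = PowerSeries.C (R := ℤ) ((-1 : ℤ) ^ n) * ξ ^ n := by
      rw [neg_pow, map_pow, map_neg, map_one]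
    rw [hneg, mul_left_comm, PowerSeries.coeff_C_mul, mul_comm ((PowerSeries.X : PowerSeries ℤ) ^ n.choose 2),
      PowerSeries.coeff_mul_X_pow']
  rw [Finset.sum_congr rfl hsummand, Finset.sum_range_succ', Finset.sum_range_succ']
  have h0 : (-1 : ℤ) ^ 0 *
      (if (0 : ℕ).choose 2 ≤ N then
        (PowerSeries.coeff (R := ℤ) (N - (0 : ℕ).choose 2)) (ξ ^ 0) else 0)
      = if N = 0 then 1 else 0 := by
    simp [PowerSeries.coeff_one]
  have h1 : (-1 : ℤ) ^ (0 + 1) *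
      (if (0 + 1 : ℕ).choose 2 ≤ N then
        (PowerSeries.coeff (R := ℤ) (N - (0 + 1 : ℕ).choose 2)) (ξ ^ (0 + 1)) else 0)
      = -(m N 1) := by
    simp [hξdef, PowerSeries.coeff_mk]
  rw [h0, h1]
  rcases Nat.eq_zero_or_pos N with rfl | hN
  · simp [hbase 1 le_rfl]
  have hmain : ∑ s ∈ Finset.range N, (-1 : ℤ) ^ (s + 1 + 1) *
      (if (s + 1 + 1 : ℕ).choose 2 ≤ N then
        (PowerSeries.coeff (R := ℤ) (N - (s + 1 + 1 : ℕ).choose 2)) (ξ ^ (s + 1 + 1)) else 0)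
      = m N 1 := by
    rw [hrec' N 1 hN le_rfl, hzero, zero_add]
    apply Finset.sum_congr rfl
    intro s _
    have e1 : s + 1 + 1 = s + 2 := by omega
    rw [e1]
    have e2 : (-1 : ℤ) ^ (s + 2) = (-1 : ℤ) ^ s := by
      rw [pow_add]; ring
    rw [e2]
    congr 1
    by_cases hcs : (s + 2).choose 2 ≤ N
    · have e3 : 1 + s + 1 = s + 2 := by omega
      rw [if_pos hcs, if_pos hcs, e3, key (N - (s + 2).choose 2) (s + 2) (by omega)]
    · rw [if_neg hcs, if_neg hcs]
  rw [hmain, if_neg (by omega)]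
  ring
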